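/- arXiv:1210.0568 — 5 statements merged into one kernel-verified Lean document; each statement's English description precedes it below -/
import Mathlib

section
/- Let F be a finite field, K, n ∈ ℕ, and H : F^K → F^n an F-linear map. Let P : F^K → ℝ≥0 be a probability mass function on source words. Suppose D : F^n → F^K is a MAP compression decoder for H, i.e., for every c in the range of H one has H(D(c)) = c and P(D(c)) ≥ P(u') for every u' ∈ F^K with H(u') = c. Consider the additive-noise channel y = x + u where x ranges over the code C = {x ∈ F^K : H(x) = 0} and u ∈ F^K is the noise, decoded by x̂ = y − D(H(y)). Then: (i) for every x ∈ C and every u ∈ F^K, x̂ = x if and only if D(H(u)) = u; consequently (ii) when u is drawn according to P, the block error probability of the channel decoder, ℙ(x̂ ≠ x), equals the block error probability of the compression decoder, ℙ(D(H(u)) ≠ u), and this value is the same for every transmitted codeword x ∈ C. -/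
open Finset

/-- A MAP compression decoder for the linear compression map `H` yields a
syndrome decoder for the additive-noise channel with codebook `{x | H x = 0}` whose
error events, and hence error probability (the same for every codeword), coincide with
those of the compression decoder. -/
theorem stmt_0 {F : Type*} [Field F] [Fintype F] [DecidableEq F] (K n : ℕ)
    (H : (Fin K → F) →ₗ[F] (Fin n → F))
    (P : (Fin K → F) → NNReal) (hP : ∑ u, P u = 1)
    (D : (Fin n → F) → (Fin K → F))
    (hD_inv : ∀ c ∈ Set.range H, H (D c) = c)
    (hD_map : ∀ c ∈ Set.range H, ∀ u' : Fin K → F, H u' = c → P u' ≤ P (D c)) :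
    -- (i) for every codeword `x` and noise `u`, the channel decoder output
    -- `x̂ = y − D(H y)` (with `y = x + u`) equals `x` iff the compression decoder
    -- recovers the noise: `D (H u) = u`.
    (∀ x : Fin K → F, H x = 0 → ∀ u : Fin K → F,
        (x + u) - D (H (x + u)) = x ↔ D (H u) = u) ∧
    -- (ii) the block error probability of the channel decoder equals the block error
    -- probability of the compression decoder, for every transmitted codeword `x`.
    (∀ x : Fin K → F, H x = 0 →
        ∑ u ∈ univ.filter (fun u : Fin K → F => (x + u) - D (H (x + u)) ≠ x), P u
          = ∑ u ∈ univ.filter (fun u : Fin K → F => D (H u) ≠ u), P u) := by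
  have key : ∀ x : Fin K → F, H x = 0 → ∀ u : Fin K → F,
      (x + u) - D (H (x + u)) = x ↔ D (H u) = u := by
    intro x hx u
    have hsyn : H (x + u) = H u := by simp [map_add, hx]
    rw [hsyn]
    constructor
    · intro h
      have : D (H u) = u := by
        have := congrArg (fun v => v - x + D (H u)) h
        simpa [sub_add_eq_add_sub, add_sub_cancel_left] using this.symm
      exact this
    · intro h; rw [h]; abel
  refine ⟨key, fun x hx => ?_⟩
  congr 1
  apply Finset.filter_congr
  intro u _
  simp only [ne_eq]
  rw [key x hx u]
end

section
/- Let G = (ZMod 2) × (ZMod 2), μ the QPSK Gray labeling and w the reflections, acting componentwise. Let enc : G^K → G^n be an additive group homomorphism (the linear encoder u ↦ uH), P : G^K → ℝ≥0 a probability mass function, N₀ > 0, u ∈ G^K the source realization, z ∈ ℂ^n the Gaussian noise realization, x = enc(u), and y = μ(x) + z the channel output. Define the joint source-channel MAP objective Φ_B(u') = exp(−‖y − μ(enc(u'))‖²/N₀)·P(u') and the composite-channel MAP objective (for transmitted all-zero codeword, discrete-block noise u and AWGN-block noise w_x(z)) Φ_A(v') = exp(−‖μ(0) + w_x(z) − μ(enc(v'))‖²/N₀)·P(v'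 + u). Then Φ_B(u') = Φ_A(u' + u) for every u' ∈ G^K; consequently the set of maximizers of Φ_B equals the translate by u of the set of maximizers of Φ_A. -/
/-- The joint source-channel MAP objective `Φ_B` and the composite-channel
MAP objective `Φ_A` (all-zero codeword, discrete-block noise `u`, AWGN-block noise
`w_x(z)`) satisfy `Φ_B(u') = Φ_A(u' + u)` for every `u'`; consequently the set of
maximizers of `Φ_B` is the translate by `u` of the set of maximizers of `Φ_A`. -/
theorem stmt_6 (K n : ℕ)
    (μ : ZMod 2 × ZMod 2 → ℂ)
    (hμ : ∀ x : ZMod 2 × ZMod 2,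
      μ x = ((-1 : ℂ) ^ x.1.val + (-1 : ℂ) ^ x.2.val * Complex.I) / (Real.sqrt 2 : ℂ))
    (w : ZMod 2 × ZMod 2 → ℂ → ℂ)
    (hw : ∀ (x : ZMod 2 × ZMod 2) (z : ℂ),
      w x z = (-1 : ℂ) ^ x.1.val * (z.re : ℂ) + (-1 : ℂ) ^ x.2.val * (z.im : ℂ) * Complex.I)
    (enc : (Fin K → ZMod 2 × ZMod 2) →+ (Fin n → ZMod 2 × ZMod 2))
    (P : (Fin K → ZMod 2 × ZMod 2) → NNReal) (hP : ∑ u, P u = 1)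
    (N₀ : ℝ) (hN₀ : 0 < N₀)
    (u : Fin K → ZMod 2 × ZMod 2) (z : Fin n → ℂ)
    (x : Fin n → ZMod 2 × ZMod 2) (hx : x = enc u)
    (y : Fin n → ℂ) (hy : ∀ t, y t = μ (x t) + z t)
    (ΦB ΦA : (Fin K → ZMod 2 × ZMod 2) → ℝ)
    (hΦB : ∀ u', ΦB u' =
      Real.exp (-(∑ t, ‖y t - μ (enc u' t)‖ ^ 2) / N₀) * (P u' : ℝ))
    (hΦA : ∀ v', ΦA v' =
      Real.exp (-(∑ t, ‖μ 0 + w (x t) (z t) - μ (enc v' t)‖ ^ 2) / N₀) * (P (v' + u) : ℝ)) :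
    (∀ u', ΦB u' = ΦA (u' + u)) ∧
    {u' | ∀ u'', ΦB u'' ≤ ΦB u'} = (fun v' => v' + u) '' {v' | ∀ v'', ΦA v'' ≤ ΦA v'} := by
  -- basic facts
  have hgg : ∀ g : ZMod 2 × ZMod 2, g + g = 0 := by decide
  have huu : ∀ g : Fin K → ZMod 2 × ZMod 2, g + u + u = g := by
    intro g; funext t; show g t + u t + u t = g t
    rw [add_assoc, hgg, add_zero]
  have signC : ∀ a c : ZMod 2, ((-1 : ℂ)) ^ ((a + c).val) = (-1) ^ a.val * (-1) ^ c.val := by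
    intro a c
    rw [ZMod.val_add, ← neg_one_pow_eq_pow_mod_two, pow_add]
  -- ofReal forms
  have hμ' : ∀ c : ZMod 2 × ZMod 2, μ c =
      (((-1 : ℝ) ^ c.1.val / Real.sqrt 2 : ℝ) : ℂ) +
      (((-1 : ℝ) ^ c.2.val / Real.sqrt 2 : ℝ) : ℂ) * Complex.I := by
    intro c; rw [hμ]; push_cast; ring
  have hre : ∀ c : ZMod 2 × ZMod 2, (μ c).re = (-1 : ℝ) ^ c.1.val / Real.sqrt 2 := by
    intro c; rw [hμ']
    simp only [Complex.add_re, Complex.mul_re, Complex.ofReal_re, Complex.ofReal_im,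
      Complex.I_re, Complex.I_im]
    ring
  have him : ∀ c : ZMod 2 × ZMod 2, (μ c).im = (-1 : ℝ) ^ c.2.val / Real.sqrt 2 := by
    intro c; rw [hμ']
    simp only [Complex.add_im, Complex.mul_im, Complex.ofReal_re, Complex.ofReal_im,
      Complex.I_re, Complex.I_im]
    ring
  -- w preserves norms
  have hs : ∀ k : ℕ, ((-1 : ℝ) ^ k) ^ 2 = 1 := by
    intro k; rw [← pow_mul, mul_comm, pow_mul]; norm_num
  have hwnorm : ∀ (a : ZMod 2 × ZMod 2) (v : ℂ), ‖w a v‖ = ‖v‖ := by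
    intro a v
    have h1 : w a v = (((-1 : ℝ) ^ a.1.val * v.re : ℝ) : ℂ) +
        (((-1 : ℝ) ^ a.2.val * v.im : ℝ) : ℂ) * Complex.I := by
      rw [hw]; push_cast; ring
    rw [Complex.norm_def, Complex.norm_def,
      Complex.normSq_apply, Complex.normSq_apply, h1]
    congr 1
    simp only [Complex.add_re, Complex.add_im, Complex.ofReal_re, Complex.ofReal_im,
      Complex.mul_re, Complex.mul_im, Complex.I_re, Complex.I_im]
    linear_combination (v.re ^ 2) * hs a.1.val + (v.im ^ 2) * hs a.2.val
  -- w is additive / sub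
  have hwsub : ∀ (a : ZMod 2 × ZMod 2) (v₁ v₂ : ℂ), w a (v₁ - v₂) = w a v₁ - w a v₂ := by
    intro a v₁ v₂
    rw [hw, hw, hw]
    simp only [Complex.sub_re, Complex.sub_im]
    push_cast; ring
  have hwadd : ∀ (a : ZMod 2 × ZMod 2) (v₁ v₂ : ℂ), w a (v₁ + v₂) = w a v₁ + w a v₂ := by
    intro a v₁ v₂
    rw [hw, hw, hw]
    simp only [Complex.add_re, Complex.add_im]
    push_cast; ring
  -- w a (μ c) = μ (a + c)
  have hwμ : ∀ a c : ZMod 2 × ZMod 2, w a (μ c) = μ (a + c) := by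
    intro a c
    rw [hw, hre, him, hμ (a + c)]
    have h1 : (a + c).1 = a.1 + c.1 := rfl
    have h2 : (a + c).2 = a.2 + c.2 := rfl
    rw [h1, h2, signC, signC]
    push_cast; ring
  -- key pointwise identity
  have key : ∀ (t : Fin n) (u' : Fin K → ZMod 2 × ZMod 2),
      ‖y t - μ (enc u' t)‖ = ‖μ 0 + w (x t) (z t) - μ (enc (u' + u) t)‖ := by
    intro t u'
    have henc : enc (u' + u) t = enc u' t + x t := by
      rw [hx, map_add]; rfl
    rw [henc, hy]
    have hvec : μ 0 + w (x t) (z t) - μ (enc u' t + x t)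
        = w (x t) (μ (x t) + z t - μ (enc u' t)) := by
      rw [hwsub, hwadd, hwμ, hwμ, hgg, add_comm (x t) (enc u' t)]
    rw [hvec, hwnorm]
  -- main pointwise equality of objectives
  have hBA : ∀ u', ΦB u' = ΦA (u' + u) := by
    intro u'
    rw [hΦB, hΦA, huu]
    have hsum : (∑ t, ‖y t - μ (enc u' t)‖ ^ 2)
        = ∑ t, ‖μ 0 + w (x t) (z t) - μ (enc (u' + u) t)‖ ^ 2 :=
      Finset.sum_congr rfl fun t _ => by rw [key t u']
    rw [hsum]
  refine ⟨hBA, ?_⟩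
  ext u'
  simp only [Set.mem_setOf_eq, Set.mem_image]
  constructor
  · intro h
    refine ⟨u' + u, fun v'' => ?_, huu u'⟩
    have := h (v'' + u)
    rw [hBA (v'' + u), hBA u', huu] at this
    exact this
  · rintro ⟨v', hv', rfl⟩
    intro u''
    rw [hBA u'', hBA (v' + u), huu]
    exact hv' (u'' + u)
end

section
/- (Theorem 1, error-region congruence, for QPSK/GF(4).) In the setting of the MAP objective correspondence, fix u ∈ G^K, set x = enc(u), and for z ∈ ℂ^n define the joint source-channel MAP error region E(u) = {z : ∃ u' ≠ u with exp(−‖μ(x)+z−μ(enc(u'))‖²/N₀)·P(u') ≥ exp(−‖z‖²/N₀)·P(u)} and the composite-channel MAP error region for the all-zero codeword E₀(u) = {z : ∃ v' ≠ 0 with exp(−‖μ(0)+z−μ(enc(v'))‖²/N₀)·P(v'+u) ≥ exp(−‖z‖²/N₀)·P(u)}. Then for every z ∈ ℂ^n: z ∈ E(u) if and only if w_x(z) ∈ E₀(u); i.e., E₀(u) = w_x(E(u)), so the two error regions are congruent via the isometry w_x of ℂ^n (which depends on u). -/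
lemma negpow (a b : ZMod 2) : ((-1:ℂ))^((a+b).val) = (-1)^a.val * (-1)^b.val := by
  rw [ZMod.val_add, ← neg_one_pow_eq_pow_mod_two, pow_add]

lemma cre (k : ℕ) : ((-1:ℂ)^k).re = (-1:ℝ)^k := by
  rw [show ((-1:ℂ))^k = (((-1:ℝ)^k : ℝ) : ℂ) from by push_cast; ring, Complex.ofReal_re]

lemma cim (k : ℕ) : ((-1:ℂ)^k).im = 0 := by
  rw [show ((-1:ℂ))^k = (((-1:ℝ)^k : ℝ) : ℂ) from by push_cast; ring, Complex.ofReal_im]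

lemma sqone (k : ℕ) : ((-1:ℝ)^k)^2 = 1 := by
  rw [← pow_mul, mul_comm, pow_mul]; norm_num

section
variable {w : ZMod 2 × ZMod 2 → ℂ → ℂ}
  (hw : ∀ (x : ZMod 2 × ZMod 2) (z : ℂ),
      w x z = (-1 : ℂ) ^ x.1.val * (z.re : ℂ) + (-1 : ℂ) ^ x.2.val * (z.im : ℂ) * Complex.I)

include hw

lemma wre (a : ZMod 2 × ZMod 2) (z : ℂ) : (w a z).re = (-1:ℝ)^a.1.val * z.re := by
  rw [hw]
  simp only [Complex.add_re, Complex.mul_re, Complex.mul_im, Complex.add_im, Complex.I_re,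
    Complex.I_im, Complex.ofReal_re, Complex.ofReal_im, cre, cim]
  ring

lemma wim (a : ZMod 2 × ZMod 2) (z : ℂ) : (w a z).im = (-1:ℝ)^a.2.val * z.im := by
  rw [hw]
  simp only [Complex.add_re, Complex.mul_re, Complex.mul_im, Complex.add_im, Complex.I_re,
    Complex.I_im, Complex.ofReal_re, Complex.ofReal_im, cre, cim]
  ring

lemma wnorm (a : ZMod 2 × ZMod 2) (z : ℂ) : ‖w a z‖ = ‖z‖ := by
  rw [Complex.norm_def, Complex.normSq_apply, wre hw, wim hw,
    Complex.norm_def, Complex.normSq_apply]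
  congr 1
  linear_combination (z.re * z.re) * sqone a.1.val + (z.im * z.im) * sqone a.2.val

lemma winv (a : ZMod 2 × ZMod 2) (z : ℂ) : w a (w a z) = z := by
  apply Complex.ext
  · rw [wre hw, wre hw]; linear_combination z.re * sqone a.1.val
  · rw [wim hw, wim hw]; linear_combination z.im * sqone a.2.val

lemma wadd (a : ZMod 2 × ZMod 2) (z z' : ℂ) : w a (z + z') = w a z + w a z' := by
  apply Complex.ext <;>
    simp only [wre hw, wim hw, Complex.add_re, Complex.add_im] <;> ring

lemma wsub (a : ZMod 2 × ZMod 2) (z z' : ℂ) : w a (z - z') = w a z - w a z' := by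
  apply Complex.ext <;>
    simp only [wre hw, wim hw, Complex.sub_re, Complex.sub_im] <;> ring

variable {μ : ZMod 2 × ZMod 2 → ℂ}
  (hμ : ∀ x : ZMod 2 × ZMod 2,
      μ x = ((-1 : ℂ) ^ x.1.val + (-1 : ℂ) ^ x.2.val * Complex.I) / (Real.sqrt 2 : ℂ))
include hμ

lemma wmu (a b : ZMod 2 × ZMod 2) : w a (μ b) = μ (a + b) := by
  rw [hw, hμ, hμ]
  rw [show ((a+b).1) = a.1 + b.1 from rfl, show ((a+b).2) = a.2 + b.2 from rfl,
    negpow, negpow]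
  have hs : (Real.sqrt 2 : ℂ) ≠ 0 := by
    exact Complex.ofReal_ne_zero.mpr (by positivity)
  field_simp
  apply Complex.ext <;>
    simp only [Complex.add_re, Complex.add_im, Complex.mul_re, Complex.mul_im, Complex.I_re,
      Complex.I_im, Complex.ofReal_re, Complex.ofReal_im, Complex.div_re, Complex.div_im,
      Complex.neg_re, Complex.neg_im, Complex.ofReal_zero, neg_zero, zero_mul,
      Complex.zero_re, Complex.zero_im,
      cre, cim] <;> try ring
  all_goals (rw [Complex.normSq_ofReal, Real.mul_self_sqrt (by norm_num : (0:ℝ) ≤ 2),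
    Real.sq_sqrt (by norm_num : (0:ℝ) ≤ 2)]; ring)

end

lemma gself : ∀ g : ZMod 2 × ZMod 2, g + g = 0 := by decide

/-- Theorem 1, error-region congruence, for QPSK/GF(4): the joint
source-channel MAP error region `E(u)` and the composite-channel MAP error region
`E₀(u)` for the all-zero codeword satisfy `z ∈ E(u) ↔ w_x(z) ∈ E₀(u)` (with
`x = enc u`), i.e. `E₀(u) = w_x(E(u))`: the two error regions are congruent via the
isometry `w_x` of ℂ^n. -/
theorem stmt_7 (K n : ℕ)
    (μ : ZMod 2 × ZMod 2 → ℂ)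
    (hμ : ∀ x : ZMod 2 × ZMod 2,
      μ x = ((-1 : ℂ) ^ x.1.val + (-1 : ℂ) ^ x.2.val * Complex.I) / (Real.sqrt 2 : ℂ))
    (w : ZMod 2 × ZMod 2 → ℂ → ℂ)
    (hw : ∀ (x : ZMod 2 × ZMod 2) (z : ℂ),
      w x z = (-1 : ℂ) ^ x.1.val * (z.re : ℂ) + (-1 : ℂ) ^ x.2.val * (z.im : ℂ) * Complex.I)
    (enc : (Fin K → ZMod 2 × ZMod 2) →+ (Fin n → ZMod 2 × ZMod 2))
    (P : (Fin K → ZMod 2 × ZMod 2) → NNReal)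
    (N₀ : ℝ) (hN₀ : 0 < N₀)
    (u : Fin K → ZMod 2 × ZMod 2)
    (x : Fin n → ZMod 2 × ZMod 2) (hx : x = enc u)
    (E E₀ : Set (Fin n → ℂ))
    (hE : E = {z | ∃ u', u' ≠ u ∧
      Real.exp (-(∑ t, ‖z t‖ ^ 2) / N₀) * (P u : ℝ) ≤
        Real.exp (-(∑ t, ‖μ (x t) + z t - μ (enc u' t)‖ ^ 2) / N₀) * (P u' : ℝ)})
    (hE₀ : E₀ = {z | ∃ v', v' ≠ 0 ∧
      Real.exp (-(∑ t, ‖z t‖ ^ 2) / N₀) * (P u : ℝ) ≤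
        Real.exp (-(∑ t, ‖μ 0 + z t - μ (enc v' t)‖ ^ 2) / N₀) * (P (v' + u) : ℝ)}) :
    (∀ z : Fin n → ℂ, z ∈ E ↔ (fun t => w (x t) (z t)) ∈ E₀) ∧
    E₀ = (fun z : Fin n → ℂ => fun t => w (x t) (z t)) '' E := by
  have fself : ∀ f : Fin K → ZMod 2 × ZMod 2, f + f = 0 :=
    fun f => funext fun i => gself (f i)
  -- key norm identity
  have hkey : ∀ (a c : ZMod 2 × ZMod 2) (z : ℂ),
      ‖μ 0 + w a z - μ (c + a)‖ = ‖μ a + z - μ c‖ := by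
    intro a c z
    have : μ 0 + w a z - μ (c + a) = w a (μ a + z - μ c) := by
      rw [wsub hw, wadd hw, wmu hw hμ, wmu hw hμ, gself a, add_comm a c]
    rw [this, wnorm hw]
  have hkey2 : ∀ (a c : ZMod 2 × ZMod 2) (z : ℂ),
      ‖μ a + z - μ (c + a)‖ = ‖μ 0 + w a z - μ c‖ := by
    intro a c z
    have := hkey a (c + a) z
    rw [add_assoc, gself a, add_zero] at this
    exact this.symm
  -- norm of w preserved in sums
  have hsum : ∀ z : Fin n → ℂ, (∑ t, ‖w (x t) (z t)‖ ^ 2) = ∑ t, ‖z t‖ ^ 2 :=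
    fun z => Finset.sum_congr rfl fun t _ => by rw [wnorm hw]
  have key : ∀ z : Fin n → ℂ, z ∈ E ↔ (fun t => w (x t) (z t)) ∈ E₀ := by
    intro z
    rw [hE, hE₀]
    simp only [Set.mem_setOf_eq]
    constructor
    · rintro ⟨u', hne, hle⟩
      refine ⟨u' + u, ?_, ?_⟩
      · intro h
        apply hne
        have h2 := congrArg (· + u) h
        simpa [add_assoc, fself] using h2
      · have hP : (u' + u) + u = u' := by rw [add_assoc, fself, add_zero]
        have hS : (∑ t, ‖μ 0 + w (x t) (z t) - μ (enc (u' + u) t)‖ ^ 2)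
            = ∑ t, ‖μ (x t) + z t - μ (enc u' t)‖ ^ 2 := by
          refine Finset.sum_congr rfl fun t _ => ?_
          have he : enc (u' + u) t = enc u' t + x t := by rw [map_add, hx]; rfl
          rw [he, hkey (x t) (enc u' t) (z t)]
        rw [hsum, hS, hP]
        exact hle
    · rintro ⟨v', hne0, hle⟩
      refine ⟨v' + u, ?_, ?_⟩
      · intro h
        apply hne0
        apply add_right_cancel (b := u)
        rw [h, zero_add]
      · have hS : (∑ t, ‖μ (x t) + z t - μ (enc (v' + u) t)‖ ^ 2)
            = ∑ t, ‖μ 0 + w (x t) (z t) - μ (enc v' t)‖ ^ 2 := by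
          refine Finset.sum_congr rfl fun t _ => ?_
          have he : enc (v' + u) t = enc v' t + x t := by rw [map_add, hx]; rfl
          rw [he, hkey2 (x t) (enc v' t) (z t)]
        rw [hS, ← hsum z]
        exact hle
  refine ⟨key, ?_⟩
  have hWW : ∀ z : Fin n → ℂ, (fun t => w (x t) (w (x t) (z t))) = z :=
    fun z => funext fun t => winv hw (x t) (z t)
  ext z
  constructor
  · intro hz
    refine ⟨fun t => w (x t) (z t), ?_, hWW z⟩
    rw [key]
    simpa [hWW z] using hz
  · rintro ⟨y, hy, rfl⟩
    exact (key y).mp hy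
end

section
/- (Symmetry of the two-block composite channel under systematic linear encoding.) Let G = (ZMod 2) × (ZMod 2), enc : G^K → G^n an additive group homomorphism, P a probability mass function on G^K, N₀ > 0, and γ the circularly symmetric complex Gaussian measure on ℂ^n with per-component variance N₀. For an information word v ∈ G^K, a discrete-noise realization u ∈ G^K and an AWGN realization z ∈ ℂ^n, say a MAP error occurs if there exists v' ≠ v with exp(−‖μ(enc(v))+z−μ(enc(v'))‖²/N₀)·P(v' + (v + u)) ≥ exp(−‖z‖²/N₀)·P(u) (the composite-channel MAP objective, where the first block output is s = v − u = v + u and P(v' − s) is the prior term). Then the error probability, computed with u distributed according to P and z according to γ, independent, is the same for every transmitted information word v as for v = 0. -/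
open MeasureTheory ProbabilityTheory
open scoped ENNReal

noncomputable section StmtNineAux

/-- sign attached to a `ZMod 2` element -/
def sg9 (c : ZMod 2) : ℝ := (-1) ^ c.val

lemma sg9_zero : sg9 0 = 1 := by simp [sg9]

lemma sg9_one : sg9 1 = -1 := by simp [sg9, ZMod.val_one]

lemma sg9_cases (c : ZMod 2) : sg9 c = 1 ∨ sg9 c = -1 := by
  have h : c = 0 ∨ c = 1 := by revert c; decide
  rcases h with h | h <;> subst h
  · exact Or.inl sg9_zero
  · exact Or.inr sg9_one

lemma sg9_mul_self (c : ZMod 2) : sg9 c * sg9 c = 1 := by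
  rcases sg9_cases c with h | h <;> rw [h] <;> norm_num

lemma sg9_add (c d : ZMod 2) : sg9 (c + d) = sg9 c * sg9 d := by
  have h : c = 0 ∨ c = 1 := by revert c; decide
  have h' : d = 0 ∨ d = 1 := by revert d; decide
  have h2 : (1 + 1 : ZMod 2) = 0 := by decide
  rcases h with h | h <;> rcases h' with h' | h' <;> subst h <;> subst h' <;>
    simp only [add_zero, zero_add, h2, sg9_zero, sg9_one] <;> norm_num

lemma sg9_pow (c : ZMod 2) : ((-1 : ℂ)) ^ c.val = ((sg9 c : ℝ) : ℂ) := by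
  have h : c = 0 ∨ c = 1 := by revert c; decide
  rcases h with h | h <;> subst h <;> simp [sg9, ZMod.val_one]

/-- coordinatewise sign flip on `ℂ` -/
def T9 (c : ZMod 2 × ZMod 2) (z : ℂ) : ℂ := ⟨sg9 c.1 * z.re, sg9 c.2 * z.im⟩

lemma T9_invol (c : ZMod 2 × ZMod 2) : Function.Involutive (T9 c) := by
  intro z
  simp only [T9, Complex.ext_iff]
  constructor <;> rw [← mul_assoc, sg9_mul_self, one_mul]

lemma T9_measurable (c : ZMod 2 × ZMod 2) : Measurable (T9 c) := by
  have : T9 c = fun z => Complex.measurableEquivRealProd.symm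
      (sg9 c.1 * z.re, sg9 c.2 * z.im) := rfl
  rw [this]
  exact Complex.measurableEquivRealProd.symm.measurable.comp
    ((Complex.measurable_re.const_mul _).prodMk (Complex.measurable_im.const_mul _))

lemma T9_norm (c : ZMod 2 × ZMod 2) (z : ℂ) : ‖T9 c z‖ = ‖z‖ := by
  rw [Complex.norm_def, Complex.norm_def]
  congr 1
  simp only [T9, Complex.normSq_mk, Complex.normSq_apply]
  have h1 := sg9_mul_self c.1
  have h2 := sg9_mul_self c.2
  nlinarith [h1, h2]

lemma T9_add (c : ZMod 2 × ZMod 2) (z w : ℂ) : T9 c (z + w) = T9 c z + T9 c w := by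
  simp only [T9, Complex.ext_iff, Complex.add_re, Complex.add_im]
  constructor <;> ring

lemma T9_sub (c : ZMod 2 × ZMod 2) (z w : ℂ) : T9 c (z - w) = T9 c z - T9 c w := by
  simp only [T9, Complex.ext_iff, Complex.sub_re, Complex.sub_im]
  constructor <;> ring

/-- `T9` as a measurable equivalence. -/
def T9e (c : ZMod 2 × ZMod 2) : ℂ ≃ᵐ ℂ where
  toFun := T9 c
  invFun := T9 c
  left_inv := T9_invol c
  right_inv := T9_invol c
  measurable_toFun := T9_measurable c
  measurable_invFun := T9_measurable c

lemma re_im_div (x y r : ℝ) :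
    (((x : ℂ) + (y : ℂ) * Complex.I) / (r : ℂ)).re = x / r ∧
    (((x : ℂ) + (y : ℂ) * Complex.I) / (r : ℂ)).im = y / r := by
  by_cases hr : r = 0
  · subst hr; simp
  · have : ((x : ℂ) + (y : ℂ) * Complex.I) / (r : ℂ)
        = ((x / r : ℝ) : ℂ) + ((y / r : ℝ) : ℂ) * Complex.I := by
      push_cast
      field_simp
    rw [this]
    simp

lemma gauss_map_sg (w : NNReal) (s : ZMod 2) :
    (gaussianReal 0 w).map (fun x => sg9 s * x) = gaussianReal 0 w := by
  rcases sg9_cases s with h | h <;> rw [h]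
  · simp
  · have := gaussianReal_map_const_mul (μ := 0) (v := w) (-1)
    simp only [mul_zero] at this
    have h2 : (⟨(-1 : ℝ) ^ 2, sq_nonneg _⟩ : NNReal) = 1 := by
      ext; norm_num
    convert this using 2
    ext; simp

end StmtNineAux

/-- symmetry of the two-block composite channel under systematic linear
encoding: the MAP error probability of the composite channel, computed with discrete
noise `u ~ P` and AWGN `z ~ γ` independent, is the same for every transmitted
information word `v` as for `v = 0`. -/
theorem stmt_9 (K n : ℕ)
    (μ : ZMod 2 × ZMod 2 → ℂ)
    (hμ : ∀ x : ZMod 2 × ZMod 2,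
      μ x = ((-1 : ℂ) ^ x.1.val + (-1 : ℂ) ^ x.2.val * Complex.I) / (Real.sqrt 2 : ℂ))
    (enc : (Fin K → ZMod 2 × ZMod 2) →+ (Fin n → ZMod 2 × ZMod 2))
    (P : (Fin K → ZMod 2 × ZMod 2) → NNReal) (hP : ∑ u, P u = 1)
    (N₀ : NNReal) (hN₀ : 0 < N₀)
    (γC : Measure ℂ)
    (hγC : γC = Measure.map (Complex.measurableEquivRealProd.symm)
      ((gaussianReal 0 (N₀ / 2)).prod (gaussianReal 0 (N₀ / 2))))
    (γ : Measure (Fin n → ℂ)) (hγ : γ = Measure.pi fun _ => γC)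
    (Err : (Fin K → ZMod 2 × ZMod 2) → (Fin K → ZMod 2 × ZMod 2) → (Fin n → ℂ) → Prop)
    (hErr : ∀ v u z, Err v u z ↔ ∃ v', v' ≠ v ∧
      Real.exp (-(∑ t, ‖z t‖ ^ 2) / (N₀ : ℝ)) * (P u : ℝ) ≤
        Real.exp (-(∑ t, ‖μ (enc v t) + z t - μ (enc v' t)‖ ^ 2) / (N₀ : ℝ))
          * (P (v' + (v + u)) : ℝ)) :
    ∀ v : Fin K → ZMod 2 × ZMod 2,
      ∑ u, (P u : ℝ≥0∞) * γ {z | Err v u z}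
        = ∑ u, (P u : ℝ≥0∞) * γ {z | Err 0 u z} := by
  -- basic facts about μ
  have hTmu : ∀ a b : ZMod 2 × ZMod 2, T9 a (μ b) = μ (a + b) := by
    intro a b
    have e1 : (a + b).1 = a.1 + b.1 := rfl
    have e2 : (a + b).2 = a.2 + b.2 := rfl
    rw [hμ b, hμ (a + b), e1, e2, sg9_pow, sg9_pow, sg9_pow, sg9_pow]
    obtain ⟨hre, him⟩ := re_im_div (sg9 b.1) (sg9 b.2) (Real.sqrt 2)
    obtain ⟨hre', him'⟩ := re_im_div (sg9 (a.1 + b.1)) (sg9 (a.2 + b.2)) (Real.sqrt 2)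
    simp only [T9, Complex.ext_iff]
    rw [hre, him, hre', him', sg9_add, sg9_add]
    constructor <;> ring
  have hchar : ∀ x : Fin K → ZMod 2 × ZMod 2, x + x = 0 := by
    intro x; funext i
    have : ∀ y : ZMod 2 × ZMod 2, y + y = 0 := by decide
    exact this (x i)
  have hcharG : ∀ y : ZMod 2 × ZMod 2, y + y = 0 := by decide
  -- key norm identity
  have hkey : ∀ (a b : ZMod 2 × ZMod 2) (ζ : ℂ),
      ‖μ 0 + T9 a ζ - μ (a + b)‖ = ‖μ a + ζ - μ b‖ := by
    intro a b ζ
    rw [← T9_norm a (μ 0 + T9 a ζ - μ (a + b)), T9_sub, T9_add, hTmu, hTmu,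
      T9_invol, add_zero, ← add_assoc a a b, hcharG, zero_add]
  -- probability measure instances
  haveI : IsProbabilityMeasure γC := by
    rw [hγC]
    exact Measure.isProbabilityMeasure_map
      (Complex.measurableEquivRealProd.symm.measurable.aemeasurable)
  -- γC is invariant under T9
  have hγCT : ∀ c : ZMod 2 × ZMod 2, γC.map (T9 c) = γC := by
    intro c
    rw [hγC, Measure.map_map (T9_measurable c)
      Complex.measurableEquivRealProd.symm.measurable]
    have hcomp : (T9 c ∘ Complex.measurableEquivRealProd.symm)
        = Complex.measurableEquivRealProd.symm ∘
          (Prod.map (fun x => sg9 c.1 * x) (fun x => sg9 c.2 * x)) := rfl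
    rw [hcomp, ← Measure.map_map Complex.measurableEquivRealProd.symm.measurable
      ((measurable_const_mul _).prodMap (measurable_const_mul _)),
      ← Measure.map_prod_map _ _ (measurable_const_mul _) (measurable_const_mul _),
      gauss_map_sg, gauss_map_sg]
  -- the pi-flip measurable equivalence
  intro v
  set Φ : (Fin n → ℂ) ≃ᵐ (Fin n → ℂ) :=
    MeasurableEquiv.piCongrRight (fun t => T9e (enc v t)) with hΦ
  have hΦapp : ∀ (z : Fin n → ℂ) (t : Fin n), Φ z t = T9 (enc v t) (z t) := fun _ _ => rfl
  -- Φ preserves γ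
  have hmap : γ.map Φ = γ := by
    rw [hγ]
    refine (Measure.pi_eq (μ := fun _ : Fin n => γC) fun s hs => ?_).symm
    rw [Measure.map_apply Φ.measurable (MeasurableSet.univ_pi hs)]
    have hpre : (⇑Φ) ⁻¹' (Set.univ.pi s) = Set.univ.pi (fun t => T9 (enc v t) ⁻¹' s t) := by
      ext z
      simp only [Set.mem_preimage, Set.mem_univ_pi]
      exact forall_congr' fun t => by rw [hΦapp]
    rw [hpre, Measure.pi_pi]
    refine Finset.prod_congr rfl fun t _ => ?_
    conv_rhs => rw [← hγCT (enc v t)]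
    rw [Measure.map_apply (T9_measurable _) (hs t)]
  -- the error events correspond under Φ
  have hset : ∀ u, {z | Err v u z} = (⇑Φ) ⁻¹' {z | Err 0 u z} := by
    intro u
    ext z
    simp only [Set.mem_setOf_eq, Set.mem_preimage, hErr]
    have hnorm1 : (∑ t, ‖Φ z t‖ ^ 2) = ∑ t, ‖z t‖ ^ 2 := by
      refine Finset.sum_congr rfl fun t _ => ?_
      rw [hΦapp, T9_norm]
    have hnorm2 : ∀ v' : Fin K → ZMod 2 × ZMod 2,
        (∑ t, ‖μ (enc 0 t) + Φ z t - μ (enc (v' + v) t)‖ ^ 2)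
          = ∑ t, ‖μ (enc v t) + z t - μ (enc v' t)‖ ^ 2 := by
      intro v'
      refine Finset.sum_congr rfl fun t _ => ?_
      rw [hΦapp]
      have h0 : enc 0 t = 0 := by rw [map_zero]; rfl
      have hw : enc (v' + v) t = enc v t + enc v' t := by
        rw [map_add]
        show enc v' t + enc v t = enc v t + enc v' t
        exact add_comm _ _
      rw [h0, hw, hkey (enc v t) (enc v' t) (z t)]
    have hPeq : ∀ v' : Fin K → ZMod 2 × ZMod 2,
        (v' + v) + (0 + u) = v' + (v + u) := by
      intro v'; abel
    constructor
    · rintro ⟨v', hne, hle⟩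
      refine ⟨v' + v, ?_, ?_⟩
      · intro h
        apply hne
        have := congrArg (· + v) h
        simpa [add_assoc, hchar v] using this
      · rw [hnorm1, hnorm2 v', hPeq v']
        exact hle
    · rintro ⟨w', hne, hle⟩
      refine ⟨w' + v, ?_, ?_⟩
      · intro h
        apply hne
        have := congrArg (· + v) h
        simpa [add_assoc, hchar v] using this
      · have hww : (w' + v) + v = w' := by rw [add_assoc, hchar v, add_zero]
        have h2 := hnorm2 (w' + v)
        rw [hww] at h2
        have h3 := hPeq (w' + v)
        rw [hww] at h3
        rw [← hnorm1, ← h2, ← h3]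
        exact hle
  refine Finset.sum_congr rfl fun u _ => ?_
  congr 1
  rw [hset u, ← MeasurableEquiv.map_apply Φ, hmap]
end

section
/- (Output-node step of the belief-propagation isomorphism, Theorem 2.) Let F be a finite field with q elements and ψ a nontrivial additive character, with DFT, IDFT and shifts as defined. Let I be a finite index set (the neighbors of an output node), fix v ∈ I, and for each v' ∈ I let g_{v'} ∈ F \ {0} be an edge label and u_{v'} ∈ F an input-node value; let d = Σ_{v'∈I} g_{v'}·u_{v'} (the output-node value imposed by the check constraint). Given messages a_{v'} : F → ℂ for v' ∈ I \ {v} and a channel message t_A : F → ℂ, define b_{v'} = a_{v'}^{+(−u_{v'})} and t_B = t_A^{+(−d)}. Define for X ∈ {A, B} the updated output-to-input message m_X = [IDFT( (∏_{v'∈I\{v}} DFT(X_{v'}^{×(g_{v'}^{-1})})) · DFT(t_X^{×(−1)}) )]^{×(−g_v)}, where X_{v'} denotes a_{v'} or b_{v'} and the product of functions is componentwise. Then m_B = m_A^{+(−u_v)}, i.e., m_B(k) = m_A(k − u_v) for all k ∈ F. -/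
/-- Discrete Fourier transform over a finite field w.r.t. an additive character `ψ`. -/
noncomputable def dft {F : Type*} [Fintype F] [Mul F] (ψ : F → ℂ) (f : F → ℂ) : F → ℂ :=
  fun g => ∑ h, f h * ψ (h * g)

/-- Inverse discrete Fourier transform over a finite field w.r.t. an additive
character `ψ`. -/
noncomputable def idft {F : Type*} [Fintype F] [Mul F] (ψ : F → ℂ) (f : F → ℂ) : F → ℂ :=
  fun h => (1 / (Fintype.card F : ℂ)) * ∑ g, f g * (starRingEnd ℂ) (ψ (h * g))

/-- Additive shift of a message: `f^{+g}(h) = f(h + g)`. -/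
def shiftAdd {F : Type*} [Add F] (g : F) (f : F → ℂ) : F → ℂ := fun h => f (h + g)

/-- Multiplicative shift of a message: `f^{×g}(h) = f(g·h)`. -/
def shiftMul {F : Type*} [Mul F] (g : F) (f : F → ℂ) : F → ℂ := fun h => f (g * h)

section Aux

variable {F : Type*} [Field F] [Fintype F]

set_option linter.unusedSectionVars false

/-- Modulation: DFT of an additive shift picks up a character factor. -/
lemma aux_dft_shiftAdd (ψ : F → ℂ) (hψ_add : ∀ x y, ψ (x + y) = ψ x * ψ y)
    (h0 : ψ 0 = 1) (s : F) (f : F → ℂ) (x : F) :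
    dft ψ (shiftAdd s f) x = ψ (-(s * x)) * dft ψ f x := by
  unfold dft shiftAdd
  rw [Finset.mul_sum]
  apply Fintype.sum_equiv (Equiv.addRight s)
  intro h
  have h1 : ψ ((h + s) * x) = ψ (h * x) * ψ (s * x) := by rw [add_mul, hψ_add]
  have h2 : ψ (-(s * x)) * ψ (s * x) = 1 := by rw [← hψ_add]; simpa using h0
  simp only [Equiv.coe_addRight, h1]
  linear_combination (-(f (h + s) * ψ (h * x))) * h2

/-- A multiplicative map turns finite sums into products. -/
lemma aux_psi_sum (ψ : F → ℂ) (hψ_add : ∀ x y, ψ (x + y) = ψ x * ψ y)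
    (h0 : ψ 0 = 1) {I : Type*} (s : Finset I) (f : I → F) :
    ψ (∑ i ∈ s, f i) = ∏ i ∈ s, ψ (f i) := by
  classical
  induction s using Finset.cons_induction with
  | empty => simpa using h0
  | cons i s hi ih => rw [Finset.sum_cons, Finset.prod_cons, hψ_add, ih]

/-- Conjugation of a character value is the character of the negative. -/
lemma aux_conj (ψ : F → ℂ) (hψ_add : ∀ x y, ψ (x + y) = ψ x * ψ y)
    (h0 : ψ 0 = 1) (x : F) : (starRingEnd ℂ) (ψ x) = ψ (-x) := by
  have hinv : ψ x * ψ (-x) = 1 := by rw [← hψ_add]; simpa using h0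
  have hn : ∀ n : ℕ, ψ (n • x) = ψ x ^ n := by
    intro n
    induction n with
    | zero => simpa using h0
    | succ n ih => rw [succ_nsmul, hψ_add, ih, pow_succ]
  have hpow : ψ x ^ Fintype.card F = 1 := by
    rw [← hn, card_nsmul_eq_zero, h0]
  have hnorm : ‖ψ x‖ = 1 :=
    Complex.norm_eq_one_of_pow_eq_one hpow Fintype.card_ne_zero
  rw [← Complex.inv_eq_conj hnorm]
  exact inv_eq_of_mul_eq_one_right hinv

end Aux

/-- output-node step of the belief-propagation isomorphism, Theorem 2:
if the incoming input-node messages and the channel message of scheme B are the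
additive shifts (by `−u_{v'}` and `−d` respectively, `d` being the output-node value
imposed by the check constraint) of those of scheme A, then the updated
output-to-input message of scheme B is the additive shift by `−u_v` of that of
scheme A: `m_B(k) = m_A(k − u_v)` for all `k`. -/
theorem stmt_12 {F : Type*} [Field F] [Fintype F] [DecidableEq F]
    (ψ : F → ℂ) (hψ_add : ∀ x y, ψ (x + y) = ψ x * ψ y) (hψ_ne : ∃ x, ψ x ≠ 1)
    {I : Type*} [Fintype I] [DecidableEq I] (v : I)
    (g : I → F) (hg : ∀ v', g v' ≠ 0) (u : I → F)
    (d : F) (hd : d = ∑ v', g v' * u v')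
    (a : I → F → ℂ) (tA : F → ℂ)
    (b : I → F → ℂ) (hb : ∀ v', b v' = shiftAdd (-u v') (a v'))
    (tB : F → ℂ) (htB : tB = shiftAdd (-d) tA)
    (mA : F → ℂ)
    (hmA : mA = shiftMul (-g v)
      (idft ψ ((∏ v' ∈ Finset.univ.erase v, dft ψ (shiftMul (g v')⁻¹ (a v'))) *
        dft ψ (shiftMul (-1) tA))))
    (mB : F → ℂ)
    (hmB : mB = shiftMul (-g v)
      (idft ψ ((∏ v' ∈ Finset.univ.erase v, dft ψ (shiftMul (g v')⁻¹ (b v'))) *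
        dft ψ (shiftMul (-1) tB)))) :
    ∀ k : F, mB k = mA (k - u v) := by
  intro k
  subst hmA hmB
  have h00 : ψ 0 = ψ 0 * ψ 0 := by simpa using hψ_add 0 0
  have h01 : ψ 0 = 0 ∨ ψ 0 = 1 := by
    rcases mul_eq_zero.mp (show ψ 0 * (ψ 0 - 1) = 0 by ring_nf; linear_combination -h00) with h | h
    · exact Or.inl h
    · exact Or.inr (by linear_combination h)
  rcases h01 with h0 | h0
  · -- degenerate case: ψ is identically zero, all DFTs vanish
    have hz : ∀ x, ψ x = 0 := by
      intro x
      have := hψ_add x 0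
      simpa [h0] using this
    simp [shiftMul, idft, dft, hz]
  · -- character case
    set S := Finset.univ.erase v with hS
    set c := g v * u v with hc
    set PA := (∏ v' ∈ S, dft ψ (shiftMul (g v')⁻¹ (a v'))) * dft ψ (shiftMul (-1) tA)
      with hPA
    have hb' : ∀ v', shiftMul (g v')⁻¹ (b v')
        = shiftAdd (-(g v' * u v')) (shiftMul (g v')⁻¹ (a v')) := by
      intro v'
      funext h
      simp only [hb, shiftMul, shiftAdd]
      congr 1
      field_simp [hg v']
    have ht' : shiftMul (-1 : F) tB = shiftAdd d (shiftMul (-1) tA) := by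
      funext h
      simp only [htB, shiftMul, shiftAdd]
      congr 1
      ring
    have hPB : ∀ x, ((∏ v' ∈ S, dft ψ (shiftMul (g v')⁻¹ (b v'))) *
        dft ψ (shiftMul (-1) tB)) x = ψ (-(c * x)) * PA x := by
      intro x
      simp only [Pi.mul_apply, Finset.prod_apply, hPA]
      rw [ht', aux_dft_shiftAdd ψ hψ_add h0]
      have hstep : ∀ v' ∈ S, dft ψ (shiftMul (g v')⁻¹ (b v')) x
          = ψ (g v' * u v' * x) * dft ψ (shiftMul (g v')⁻¹ (a v')) x := by
        intro v' _
        rw [hb', aux_dft_shiftAdd ψ hψ_add h0, neg_mul, neg_neg]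
      rw [Finset.prod_congr rfl hstep, Finset.prod_mul_distrib,
        ← aux_psi_sum ψ hψ_add h0]
      have hsum : (∑ v' ∈ S, g v' * u v' * x) + (-(d * x)) = -(c * x) := by
        rw [hd, Finset.sum_mul, ← Finset.add_sum_erase _ _ (Finset.mem_univ v)]
        ring
      have hcomb : ψ (∑ v' ∈ S, g v' * u v' * x) * ψ (-(d * x)) = ψ (-(c * x)) := by
        rw [← hψ_add, hsum]
      calc ψ (∑ v' ∈ S, g v' * u v' * x) *
            (∏ v' ∈ S, dft ψ (shiftMul (g v')⁻¹ (a v')) x) *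
            (ψ (-(d * x)) * dft ψ (shiftMul (-1) tA) x)
          = (ψ (∑ v' ∈ S, g v' * u v' * x) * ψ (-(d * x))) *
            ((∏ v' ∈ S, dft ψ (shiftMul (g v')⁻¹ (a v')) x) *
              dft ψ (shiftMul (-1) tA) x) := by ring
        _ = ψ (-(c * x)) * ((∏ v' ∈ S, dft ψ (shiftMul (g v')⁻¹ (a v')) x) *
              dft ψ (shiftMul (-1) tA) x) := by rw [hcomb]
    have key : ∀ h : F, idft ψ ((∏ v' ∈ S, dft ψ (shiftMul (g v')⁻¹ (b v'))) *
        dft ψ (shiftMul (-1) tB)) h = idft ψ PA (h + c) := by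
      intro h
      unfold idft
      congr 1
      apply Finset.sum_congr rfl
      intro x _
      rw [hPB x, aux_conj ψ hψ_add h0, aux_conj ψ hψ_add h0]
      have hsplit : ψ (-((h + c) * x)) = ψ (-(c * x)) * ψ (-(h * x)) := by
        rw [← hψ_add]; congr 1; ring
      rw [hsplit]
      ring
    simp only [shiftMul]
    rw [key]
    congr 1
    ring
end
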